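/- Let k ≥ 2 be an integer. Any resolving set for the Johnson graph J(2k+1,k) is also a resolving set for the Odd graph O_{k+1} = K(2k+1,k); consequently β(J(2k+1,k)) = β(K(2k+1,k)). -/

import Mathlib

/-- The Johnson graph `J(n,k)`: vertices are the `k`-element subsets of `{1,...,n}`,
two vertices adjacent iff their intersection has `k-1` elements. -/
def johnsonGraph (n k : ℕ) : SimpleGraph {s : Finset (Fin n) // s.card = k} where
  Adj U W := U ≠ W ∧ (U.1 ∩ W.1).card = k - 1
  symm := by
    constructor
    intro U W h
    exact ⟨h.1.symm, by rw [Finset.inter_comm]; exact h.2⟩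
  loopless := by
    constructor
    intro U h
    exact h.1 rfl

/-- The Kneser graph `K(n,k)`: vertices are the `k`-element subsets of `{1,...,n}`,
two vertices adjacent iff the corresponding subsets are disjoint. -/
def kneserGraph (n k : ℕ) : SimpleGraph {s : Finset (Fin n) // s.card = k} where
  Adj U W := U ≠ W ∧ Disjoint U.1 W.1
  symm := by
    constructor
    intro U W h
    exact ⟨h.1.symm, h.2.symm⟩
  loopless := by
    constructor
    intro U h
    exact h.1 rfl

namespace JOaux

variable {k : ℕ}

abbrev JV (k : ℕ) := {s : Finset (Fin (2 * k + 1)) // s.card = k}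

lemma inter_card_le (U W : JV k) : (U.1 ∩ W.1).card ≤ k :=
  le_trans (Finset.card_le_card Finset.inter_subset_left) (le_of_eq U.2)

lemma eq_of_inter_card (U W : JV k) (h : k ≤ (U.1 ∩ W.1).card) : U = W := by
  have h1 : U.1 ∩ W.1 = U.1 :=
    Finset.eq_of_subset_of_card_le Finset.inter_subset_left (by rw [U.2]; exact h)
  have h2 : U.1 ⊆ W.1 := fun x hx => by
    rw [← h1] at hx
    exact (Finset.mem_inter.mp hx).2
  exact Subtype.ext (Finset.eq_of_subset_of_card_le h2 (by rw [U.2, W.2]))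

/-- The swap vertex: replace `a` by `b`. -/
def swapV (U : JV k) (a b : Fin (2 * k + 1)) (ha : a ∈ U.1) (hb : b ∉ U.1) : JV k :=
  ⟨insert b (U.1.erase a), by
    rw [Finset.card_insert_of_notMem (fun h => hb (Finset.mem_of_mem_erase h)),
      Finset.card_erase_of_mem ha, U.2]
    have : 1 ≤ k := by
      by_contra h
      have : k = 0 := by omega
      subst this
      exact absurd (Finset.card_eq_zero.mp U.2 ▸ ha) (Finset.notMem_empty a)
    omega⟩

lemma swapV_mem_a (U : JV k) (a b : Fin (2 * k + 1)) (ha : a ∈ U.1) (hb : b ∉ U.1) :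
    a ∉ (swapV U a b ha hb).1 := by
  simp only [swapV, Finset.mem_insert, Finset.mem_erase]
  rintro (rfl | ⟨h, _⟩)
  · exact hb ha
  · exact h rfl

lemma swapV_inter (U : JV k) (a b : Fin (2 * k + 1)) (ha : a ∈ U.1) (hb : b ∉ U.1) :
    U.1 ∩ (swapV U a b ha hb).1 = U.1.erase a := by
  simp only [swapV]
  rw [Finset.inter_insert_of_notMem hb, Finset.inter_eq_right.mpr (Finset.erase_subset _ _)]

lemma swapV_card_inter (U : JV k) (a b : Fin (2 * k + 1)) (ha : a ∈ U.1) (hb : b ∉ U.1) :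
    (U.1 ∩ (swapV U a b ha hb).1).card = k - 1 := by
  rw [swapV_inter, Finset.card_erase_of_mem ha, U.2]

lemma swapV_ne (U : JV k) (a b : Fin (2 * k + 1)) (ha : a ∈ U.1) (hb : b ∉ U.1) :
    U ≠ swapV U a b ha hb := by
  intro h
  exact swapV_mem_a U a b ha hb (h ▸ ha)

/-- Intersection with `W` when `a ∉ W`, `b ∈ W`: grows by one. -/
lemma swapV_inter_W_grow (U W : JV k) (a b : Fin (2 * k + 1)) (ha : a ∈ U.1) (hb : b ∉ U.1)
    (haW : a ∉ W.1) (hbW : b ∈ W.1) :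
    (swapV U a b ha hb).1 ∩ W.1 = insert b (U.1 ∩ W.1) := by
  simp only [swapV]
  rw [Finset.insert_inter_of_mem hbW, Finset.erase_inter,
    Finset.erase_eq_of_notMem (fun h => haW (Finset.mem_inter.mp h).2)]

/-- Intersection with `W` when `a ∈ W`, `b ∉ W`: shrinks by one. -/
lemma swapV_inter_W_shrink (U W : JV k) (a b : Fin (2 * k + 1)) (ha : a ∈ U.1) (hb : b ∉ U.1)
    (hbW : b ∉ W.1) :
    (swapV U a b ha hb).1 ∩ W.1 = (U.1 ∩ W.1).erase a := by
  simp only [swapV]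
  rw [Finset.insert_inter_of_notMem hbW, Finset.erase_inter]

lemma sdiff_nonempty_of_inter_lt (U W : JV k) (h : (U.1 ∩ W.1).card < k) :
    (U.1 \ W.1).Nonempty ∧ (W.1 \ U.1).Nonempty := by
  constructor
  · rw [← Finset.card_pos]
    have h1 := Finset.card_sdiff_add_card_inter U.1 W.1
    rw [U.2] at h1
    omega
  · rw [← Finset.card_pos]
    have h1 := Finset.card_sdiff_add_card_inter W.1 U.1
    rw [Finset.inter_comm, W.2] at h1
    omega

lemma johnson_exists_walk : ∀ d (U W : JV k), k - (U.1 ∩ W.1).card = d →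
    ∃ p : (johnsonGraph (2 * k + 1) k).Walk U W, p.length = d := by
  intro d
  induction d with
  | zero =>
    intro U W h
    have := inter_card_le U W
    obtain rfl : U = W := eq_of_inter_card U W (by omega)
    exact ⟨SimpleGraph.Walk.nil, rfl⟩
  | succ d ih =>
    intro U W h
    have hle := inter_card_le U W
    have hlt : (U.1 ∩ W.1).card < k := by omega
    obtain ⟨⟨a, haU⟩, ⟨b, hbW⟩⟩ := sdiff_nonempty_of_inter_lt U W hlt
    rw [Finset.mem_sdiff] at haU hbW
    set U' := swapV U a b haU.1 hbW.2 with hU'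
    have hadj : (johnsonGraph (2 * k + 1) k).Adj U U' :=
      ⟨swapV_ne U a b _ _, swapV_card_inter U a b _ _⟩
    have hI : (U'.1 ∩ W.1).card = (U.1 ∩ W.1).card + 1 := by
      rw [hU', swapV_inter_W_grow U W a b haU.1 hbW.2 haU.2 hbW.1,
        Finset.card_insert_of_notMem (fun hm => hbW.2 (Finset.mem_inter.mp hm).1)]
    obtain ⟨p, hp⟩ := ih U' W (by omega)
    exact ⟨SimpleGraph.Walk.cons hadj p, by simp [hp]⟩

lemma johnson_walk_lower (U W : JV k) (p : (johnsonGraph (2 * k + 1) k).Walk U W) :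
    k - (U.1 ∩ W.1).card ≤ p.length := by
  induction p with
  | nil =>
    simp only [Finset.inter_self, SimpleGraph.Walk.length_nil, U.2]
    omega
  | @cons u v w hadj p ih =>
    obtain ⟨hne, hcard⟩ := id hadj
    have h1 := Finset.card_inter_add_card_sdiff (v.1 ∩ w.1) u.1
    have h2 : v.1 ∩ w.1 ∩ u.1 ⊆ u.1 ∩ w.1 := fun x hx => by
      simp only [Finset.mem_inter] at hx ⊢; tauto
    have h3 : (v.1 ∩ w.1) \ u.1 ⊆ v.1 \ u.1 := by
      intro x hx
      simp only [Finset.mem_sdiff, Finset.mem_inter] at hx ⊢; tauto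
    have h4 := Finset.card_sdiff_add_card_inter v.1 u.1
    rw [Finset.inter_comm] at h4
    have h5 := Finset.card_le_card h2
    have h6 := Finset.card_le_card h3
    have hk := inter_card_le u w
    have hk2 := inter_card_le v w
    rw [v.2] at h4
    simp only [SimpleGraph.Walk.length_cons]
    omega

lemma johnson_dist (U W : JV k) :
    (johnsonGraph (2 * k + 1) k).dist U W = k - (U.1 ∩ W.1).card := by
  obtain ⟨p, hp⟩ := johnson_exists_walk (k - (U.1 ∩ W.1).card) U W rfl
  refine le_antisymm (hp ▸ SimpleGraph.dist_le p) ?_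
  obtain ⟨q, hq⟩ := SimpleGraph.Reachable.exists_walk_length_eq_dist ⟨p⟩
  rw [← hq]
  exact johnson_walk_lower U W q

lemma exists_disjoint (hk : 1 ≤ k) (A : Finset (Fin (2 * k + 1))) (hA : A.card ≤ k + 1) :
    ∃ B : JV k, Disjoint B.1 A := by
  have hcompl : k ≤ Aᶜ.card := by
    rw [Finset.card_compl, Fintype.card_fin]
    omega
  obtain ⟨B, hBsub, hBcard⟩ := Finset.exists_subset_card_eq hcompl
  refine ⟨⟨B, hBcard⟩, Finset.disjoint_left.mpr fun x hx hxa => ?_⟩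
  exact (Finset.mem_compl.mp (hBsub hx)) hxa

lemma ne_of_disjoint (hk : 1 ≤ k) {B X : JV k} (hd : Disjoint B.1 X.1) : B ≠ X := by
  rintro rfl
  have h0 : B.1 = ∅ := disjoint_self.mp hd
  have hc := B.2
  rw [h0, Finset.card_empty] at hc
  omega

lemma kneser_two_step (hk : 1 ≤ k) (U U' : JV k) (h : (U.1 ∪ U'.1).card ≤ k + 1) :
    ∃ p : (kneserGraph (2 * k + 1) k).Walk U U', p.length = 2 := by
  obtain ⟨B, hB⟩ := exists_disjoint hk (U.1 ∪ U'.1) h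
  have hBU : Disjoint B.1 U.1 := hB.mono_right Finset.subset_union_left
  have hBU' : Disjoint B.1 U'.1 := hB.mono_right Finset.subset_union_right
  have e1 : (kneserGraph (2 * k + 1) k).Adj U B := ⟨(ne_of_disjoint hk hBU).symm, hBU.symm⟩
  have e2 : (kneserGraph (2 * k + 1) k).Adj B U' := ⟨ne_of_disjoint hk hBU', hBU'⟩
  exact ⟨SimpleGraph.Walk.cons e1 (SimpleGraph.Walk.cons e2 SimpleGraph.Walk.nil), rfl⟩

lemma swapV_union (U : JV k) (a b : Fin (2 * k + 1)) (ha : a ∈ U.1) (hb : b ∉ U.1) :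
    U.1 ∪ (swapV U a b ha hb).1 = insert b U.1 := by
  simp only [swapV]
  rw [Finset.union_insert]
  congr 1
  rw [Finset.union_eq_left.mpr (Finset.erase_subset _ _)]

lemma swapV_union_card (U : JV k) (a b : Fin (2 * k + 1)) (ha : a ∈ U.1) (hb : b ∉ U.1) :
    (U.1 ∪ (swapV U a b ha hb).1).card = k + 1 := by
  rw [swapV_union, Finset.card_insert_of_notMem hb, U.2]

lemma kneser_walk_even (hk : 1 ≤ k) : ∀ d (U W : JV k), k - (U.1 ∩ W.1).card = d →
    ∃ p : (kneserGraph (2 * k + 1) k).Walk U W, p.length = 2 * d := by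
  intro d
  induction d with
  | zero =>
    intro U W h
    have := inter_card_le U W
    obtain rfl : U = W := eq_of_inter_card U W (by omega)
    exact ⟨SimpleGraph.Walk.nil, rfl⟩
  | succ d ih =>
    intro U W h
    have hle := inter_card_le U W
    have hlt : (U.1 ∩ W.1).card < k := by omega
    obtain ⟨⟨a, haU⟩, ⟨b, hbW⟩⟩ := sdiff_nonempty_of_inter_lt U W hlt
    rw [Finset.mem_sdiff] at haU hbW
    set U' := swapV U a b haU.1 hbW.2 with hU'
    obtain ⟨p1, hp1⟩ := kneser_two_step hk U U' (le_of_eq (swapV_union_card U a b _ _))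
    have hI : (U'.1 ∩ W.1).card = (U.1 ∩ W.1).card + 1 := by
      rw [hU', swapV_inter_W_grow U W a b haU.1 hbW.2 haU.2 hbW.1,
        Finset.card_insert_of_notMem (fun hm => hbW.2 (Finset.mem_inter.mp hm).1)]
    obtain ⟨p2, hp2⟩ := ih U' W (by omega)
    exact ⟨p1.append p2, by rw [SimpleGraph.Walk.length_append, hp1, hp2]; ring⟩

lemma kneser_walk_odd (hk : 1 ≤ k) : ∀ d (U W : JV k), (U.1 ∩ W.1).card = d →
    ∃ p : (kneserGraph (2 * k + 1) k).Walk U W, p.length = 2 * d + 1 := by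
  intro d
  induction d with
  | zero =>
    intro U W h
    have hdisj : Disjoint U.1 W.1 := by
      rw [Finset.disjoint_iff_inter_eq_empty, ← Finset.card_eq_zero]
      exact h
    exact ⟨SimpleGraph.Walk.cons ⟨ne_of_disjoint hk hdisj, hdisj⟩ SimpleGraph.Walk.nil, rfl⟩
  | succ d ih =>
    intro U W h
    -- pick a in the intersection
    have hne : (U.1 ∩ W.1).Nonempty := by rw [← Finset.card_pos, h]; omega
    obtain ⟨a, ha⟩ := hne
    rw [Finset.mem_inter] at ha
    -- pick b outside the union
    have hUW : (U.1 ∪ W.1).card < 2 * k + 1 := by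
      have h1 := Finset.card_union_add_card_inter U.1 W.1
      rw [U.2, W.2, h] at h1
      omega
    have hcne : ((U.1 ∪ W.1)ᶜ).Nonempty := by
      rw [← Finset.card_pos, Finset.card_compl, Fintype.card_fin]
      omega
    obtain ⟨b, hb⟩ := hcne
    rw [Finset.mem_compl, Finset.mem_union] at hb
    push_neg at hb
    set U' := swapV U a b ha.1 hb.1 with hU'
    obtain ⟨p1, hp1⟩ := kneser_two_step hk U U' (le_of_eq (swapV_union_card U a b _ _))
    have hI : (U'.1 ∩ W.1).card = d := by
      rw [hU', swapV_inter_W_shrink U W a b ha.1 hb.1 hb.2,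
        Finset.card_erase_of_mem (Finset.mem_inter.mpr ha), h]
      omega
    obtain ⟨p2, hp2⟩ := ih U' W hI
    exact ⟨p1.append p2, by rw [SimpleGraph.Walk.length_append, hp1, hp2]; ring⟩

lemma kneser_walk_lower (U W : JV k) (p : (kneserGraph (2 * k + 1) k).Walk U W) :
    min (2 * (k - (U.1 ∩ W.1).card)) (2 * (U.1 ∩ W.1).card + 1) ≤ p.length := by
  induction p with
  | nil =>
    simp only [Finset.inter_self, SimpleGraph.Walk.length_nil, U.2]
    omega
  | @cons u v w hadj p ih =>
    obtain ⟨hne, hdisj⟩ := id hadj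
    have hiu := inter_card_le u w
    have hiv := inter_card_le v w
    -- (a) card (v ∩ w) ≤ k - card (u ∩ w) : v ∩ w ⊆ w \ u
    have ha1 : v.1 ∩ w.1 ⊆ w.1 \ u.1 := by
      intro x hx
      rw [Finset.mem_inter] at hx
      rw [Finset.mem_sdiff]
      exact ⟨hx.2, Finset.disjoint_right.mp hdisj hx.1⟩
    have ha2 := Finset.card_le_card ha1
    have ha3 := Finset.card_sdiff_add_card_inter w.1 u.1
    rw [Finset.inter_comm, w.2] at ha3
    -- (b) k ≤ card (v ∩ w) + card (u ∩ w) + 1 by inclusion-exclusion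
    have hb1 := Finset.card_union_add_card_inter v.1 w.1
    rw [v.2, w.2] at hb1
    have hb2 := Finset.card_union_add_card_inter (v.1 ∪ w.1) u.1
    rw [u.2] at hb2
    have hb3 : (v.1 ∪ w.1) ∩ u.1 = (v.1 ∩ u.1) ∪ (w.1 ∩ u.1) := Finset.union_inter_distrib_right _ _ _
    have hb4 : (v.1 ∩ u.1).card = 0 := by
      rw [Finset.card_eq_zero, ← Finset.disjoint_iff_inter_eq_empty]
      exact hdisj.symm
    have hb5 : ((v.1 ∪ w.1) ∩ u.1).card ≤ (v.1 ∩ u.1).card + (w.1 ∩ u.1).card := by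
      rw [hb3]; exact Finset.card_union_le _ _
    have hb6 : (w.1 ∩ u.1).card = (u.1 ∩ w.1).card := by rw [Finset.inter_comm]
    have hb7 : ((v.1 ∪ w.1) ∪ u.1).card ≤ 2 * k + 1 := by
      have := Finset.card_le_univ ((v.1 ∪ w.1) ∪ u.1)
      simpa using this
    simp only [SimpleGraph.Walk.length_cons]
    omega

lemma kneser_dist (hk : 1 ≤ k) (U W : JV k) :
    (kneserGraph (2 * k + 1) k).dist U W
      = min (2 * (k - (U.1 ∩ W.1).card)) (2 * (U.1 ∩ W.1).card + 1) := by
  obtain ⟨p1, hp1⟩ := kneser_walk_even hk (k - (U.1 ∩ W.1).card) U W rfl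
  obtain ⟨p2, hp2⟩ := kneser_walk_odd hk (U.1 ∩ W.1).card U W rfl
  refine le_antisymm (le_min (hp1 ▸ SimpleGraph.dist_le p1) (hp2 ▸ SimpleGraph.dist_le p2)) ?_
  obtain ⟨q, hq⟩ := SimpleGraph.Reachable.exists_walk_length_eq_dist (⟨p1⟩ : (kneserGraph (2 * k + 1) k).Reachable U W)
  rw [← hq]
  exact kneser_walk_lower U W q

end JOaux

lemma JOkey (k : ℕ) (hk : 2 ≤ k) (u v x : JOaux.JV k) :
    (johnsonGraph (2 * k + 1) k).dist u x ≠ (johnsonGraph (2 * k + 1) k).dist v x ↔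
    (kneserGraph (2 * k + 1) k).dist u x ≠ (kneserGraph (2 * k + 1) k).dist v x := by
  rw [JOaux.johnson_dist, JOaux.johnson_dist,
    JOaux.kneser_dist (by omega), JOaux.kneser_dist (by omega)]
  have h1 := JOaux.inter_card_le u x
  have h2 := JOaux.inter_card_le v x
  omega

/-- A set `S` of vertices is a resolving set for `G` if every pair of distinct
vertices is resolved by some vertex of `S`, i.e. is at different distances from it. -/
def resolvingSet {V : Type*} (G : SimpleGraph V) (S : Set V) : Prop :=
  ∀ u v : V, u ≠ v → ∃ x ∈ S, G.dist u x ≠ G.dist v x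

/-- The metric dimension `β(G)`: the minimum cardinality of a resolving set for `G`. -/
noncomputable def metricDim {V : Type*} (G : SimpleGraph V) : ℕ :=
  sInf {m | ∃ S : Finset V, resolvingSet G ↑S ∧ S.card = m}

/-- For `k ≥ 2`, any resolving set for the Johnson graph `J(2k+1,k)` is also a
resolving set for the Odd graph `O_{k+1} = K(2k+1,k)`; consequently
`β(J(2k+1,k)) = β(K(2k+1,k))`. -/
theorem johnson_resolving_implies_odd (k : ℕ) (hk : 2 ≤ k) :
    (∀ S : Set {s : Finset (Fin (2 * k + 1)) // s.card = k},
      resolvingSet (johnsonGraph (2 * k + 1) k) S →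
        resolvingSet (kneserGraph (2 * k + 1) k) S) ∧
    metricDim (johnsonGraph (2 * k + 1) k) = metricDim (kneserGraph (2 * k + 1) k) := by
  have hiff : ∀ S : Set {s : Finset (Fin (2 * k + 1)) // s.card = k},
      resolvingSet (johnsonGraph (2 * k + 1) k) S ↔
        resolvingSet (kneserGraph (2 * k + 1) k) S := by
    intro S
    constructor <;> intro hS u v huv <;> obtain ⟨x, hxS, hx⟩ := hS u v huv
    · exact ⟨x, hxS, (JOkey k hk u v x).mp hx⟩
    · exact ⟨x, hxS, (JOkey k hk u v x).mpr hx⟩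
  refine ⟨fun S hS => (hiff S).mp hS, ?_⟩
  unfold metricDim
  congr 1
  ext m
  constructor <;> rintro ⟨S, hS, rfl⟩
  · exact ⟨S, (hiff ↑S).mp hS, rfl⟩
  · exact ⟨S, (hiff ↑S).mpr hS, rfl⟩
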